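/- Let κ be an infinite regular cardinal and let K be a κ-bounded category which has the amalgamation property and the joint embedding property. Assume further that F is a dominating family of arrows of K with |F| ≤ κ. Then there exists a Fraïssé sequence of length κ in K. -/

import Mathlib

open CategoryTheory

universe w v u

/-- The index set of ordinals below `κ`, used to index inductive sequences of length `κ`. -/
abbrev Idx (κ : Ordinal.{w}) : Type (w + 1) := {ξ : Ordinal.{w} // ξ < κ}

/-- An inductive sequence indexed by a preorder `I` is a Fraïssé sequence if it is
cofinal (U) and has the amalgamation property (A). -/
def IsFraisseSeq {C : Type u} [Category.{v} C] {I : Type*} [Preorder I] (F : I ⥤ C) : Prop :=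
  (∀ x : C, ∃ ξ : I, Nonempty (x ⟶ F.obj ξ)) ∧
  (∀ (ξ : I) (y : C) (f : F.obj ξ ⟶ y),
    ∃ (η : I) (h : ξ ≤ η) (g : y ⟶ F.obj η), f ≫ g = F.map (homOfLE h))

/-- The amalgamation property of a category. -/
def AmalgProp (C : Type u) [Category.{v} C] : Prop :=
  ∀ (a b c : C) (f : a ⟶ b) (g : a ⟶ c),
    ∃ (d : C) (f' : b ⟶ d) (g' : c ⟶ d), f ≫ f' = g ≫ g'

/-- The joint embedding property of a category. -/
def JointEmbProp (C : Type u) [Category.{v} C] : Prop :=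
  ∀ a b : C, ∃ d : C, Nonempty (a ⟶ d) ∧ Nonempty (b ⟶ d)

/-- A category is `κ`-bounded if every inductive sequence of length `< κ` admits a cocone. -/
def KappaBounded (C : Type u) [Category.{v} C] (κ : Cardinal.{w}) : Prop :=
  ∀ lam : Ordinal.{w}, lam < κ.ord → ∀ x : Idx lam ⥤ C,
    ∃ (y : C) (c : ∀ α : Idx lam, x.obj α ⟶ y),
      ∀ (α β : Idx lam) (h : α ≤ β), x.map (homOfLE h) ≫ c β = c α

/-- A family `F` of arrows of `C` is dominating if (D1) the domains of members of `F` form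
a cofinal family of objects, and (D2) every arrow out of such a domain can be extended, by
composing with a further arrow, to a member of `F`. -/
def Dominating {C : Type u} [Category.{v} C] (F : Set (Arrow C)) : Prop :=
  (∀ x : C, ∃ f ∈ F, Nonempty (x ⟶ f.left)) ∧
  (∀ f ∈ F, ∀ (x : C) (g : f.left ⟶ x), ∃ (w : C) (h : x ⟶ w), Arrow.mk (g ≫ h) ∈ F)


namespace FraisseAux

variable {C : Type u} [Category.{v} C]

structure Sys (C : Type u) [Category.{v} C] (ξ : Ordinal.{w}) where
  obj : ∀ η, η ≤ ξ → C
  map : ∀ η ζ (h1 : η ≤ ζ) (h2 : ζ ≤ ξ), obj η (h1.trans h2) ⟶ obj ζ h2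
  map_self : ∀ η (h : η ≤ ξ), map η η le_rfl h = 𝟙 (obj η h)
  map_comp : ∀ η ζ θ (h1 : η ≤ ζ) (h2 : ζ ≤ θ) (h3 : θ ≤ ξ),
    map η ζ h1 (h2.trans h3) ≫ map ζ θ h2 h3 = map η θ (h1.trans h2) h3

namespace Sys

variable {ξ : Ordinal.{w}}

@[reducible] def top (S : Sys.{w} C ξ) : C := S.obj ξ le_rfl

lemma map_comp_assoc (S : Sys.{w} C ξ) {Z : C} (η ζ θ : Ordinal.{w}) (h1 : η ≤ ζ) (h2 : ζ ≤ θ)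
    (h3 : θ ≤ ξ) (t : S.obj θ h3 ⟶ Z) :
    S.map η ζ h1 (h2.trans h3) ≫ S.map ζ θ h2 h3 ≫ t = S.map η θ (h1.trans h2) h3 ≫ t := by
  rw [← Category.assoc, S.map_comp]

/-- constant system -/
def const (C : Type u) [Category.{v} C] (ξ : Ordinal.{w}) (y : C) : Sys.{w} C ξ where
  obj _ _ := y
  map _ _ _ _ := 𝟙 y
  map_self _ _ := rfl
  map_comp _ _ _ _ _ _ := Category.id_comp _

section Extend

variable (S : Sys.{w} C ξ) (c : C)

noncomputable def extObj (η : Ordinal.{w}) (_ : η ≤ Order.succ ξ) : C :=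
  if h' : η ≤ ξ then S.obj η h' else c

lemma extObj_of_le {η} (h : η ≤ Order.succ ξ) (h' : η ≤ ξ) : extObj S c η h = S.obj η h' :=
  dif_pos h'

lemma le_of_not_le {η} (h : η ≤ Order.succ ξ) (h' : ¬ η ≤ ξ) : η = Order.succ ξ := by
  rcases h.lt_or_eq with h2 | h2
  · exact absurd (Order.lt_succ_iff.mp h2) h'
  · exact h2

lemma extObj_top {η} (h : η ≤ Order.succ ξ) (h' : ¬ η ≤ ξ) : extObj S c η h = c :=
  dif_neg h'

variable (e : S.top ⟶ c)

noncomputable def extMap (η ζ : Ordinal.{w}) (h1 : η ≤ ζ) (h2 : ζ ≤ Order.succ ξ) :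
    extObj S c η (h1.trans h2) ⟶ extObj S c ζ h2 :=
  if h2' : ζ ≤ ξ then
    eqToHom (extObj_of_le S c _ (h1.trans h2')) ≫ S.map η ζ h1 h2' ≫
      eqToHom (extObj_of_le S c h2 h2').symm
  else if h1' : η ≤ ξ then
    eqToHom (extObj_of_le S c _ h1') ≫ S.map η ξ h1' le_rfl ≫ e ≫
      eqToHom (extObj_top S c h2 h2').symm
  else
    eqToHom ((extObj_top S c _ h1').trans (extObj_top S c h2 h2').symm)

noncomputable def extend : Sys.{w} C (Order.succ ξ) where
  obj := extObj S c
  map := extMap S c e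
  map_self := by
    intro η h
    unfold extMap
    split_ifs with h1
    · simp [S.map_self]
    · simp
  map_comp := by
    intro η ζ θ h1 h2 h3
    show extMap S c e η ζ h1 (h2.trans h3) ≫ extMap S c e ζ θ h2 h3 = extMap S c e η θ (h1.trans h2) h3
    unfold extMap
    by_cases hθ : θ ≤ ξ
    · have hζ : ζ ≤ ξ := h2.trans hθ
      have hη : η ≤ ξ := h1.trans hζ
      rw [dif_pos hθ, dif_pos hθ, dif_pos hζ]
      simp [S.map_comp_assoc]
    · rw [dif_neg hθ, dif_neg hθ]
      by_cases hζ : ζ ≤ ξ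
      · have hη : η ≤ ξ := h1.trans hζ
        rw [dif_pos hζ, dif_pos hζ, dif_pos hη]
        simp [S.map_comp_assoc]
      · rw [dif_neg hζ, dif_neg hζ]
        by_cases hη : η ≤ ξ
        · rw [dif_pos hη, dif_pos hη]
          simp
        · rw [dif_neg hη, dif_neg hη]
          simp


lemma extend_top : (S.extend c e).top = c :=
  extObj_top S c le_rfl (Order.lt_succ ξ).not_ge

lemma extend_obj_restrict (η : Ordinal.{w}) (h : η ≤ ξ) (h' : η ≤ Order.succ ξ) :
    (S.extend c e).obj η h' = S.obj η h :=
  extObj_of_le S c h' h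

lemma extend_map_restrict (η ζ : Ordinal.{w}) (h1 : η ≤ ζ) (h2 : ζ ≤ ξ) (h2' : ζ ≤ Order.succ ξ)
    (E1 : (S.extend c e).obj η (h1.trans h2') = S.obj η (h1.trans h2))
    (E2 : S.obj ζ h2 = (S.extend c e).obj ζ h2') :
    (S.extend c e).map η ζ h1 h2' = eqToHom E1 ≫ S.map η ζ h1 h2 ≫ eqToHom E2 := by
  show extMap S c e η ζ h1 h2' = _
  unfold extMap
  rw [dif_pos h2]
  rfl

lemma extend_succ_map (E1 : (S.extend c e).obj ξ (Order.le_succ ξ) = S.top)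
    (E2 : c = (S.extend c e).top) :
    (S.extend c e).map ξ (Order.succ ξ) (Order.le_succ ξ) le_rfl = eqToHom E1 ≫ e ≫ eqToHom E2 := by
  show extMap S c e ξ (Order.succ ξ) (Order.le_succ ξ) le_rfl = _
  unfold extMap
  rw [dif_neg (Order.lt_succ ξ).not_ge, dif_pos le_rfl]
  simp [S.map_self, Sys.top]
  rfl

end Extend



section Lim

variable {lam : Ordinal.{w}} (prev : ∀ η, η < lam → Sys.{w} C η)

structure Compat : Prop where
  obj_eq : ∀ η ζ (h : η ≤ ζ) (hζ : ζ < lam),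
    (prev ζ hζ).obj η h = (prev η (h.trans_lt hζ)).top
  map_eq : ∀ η ζ θ (h1 : η ≤ ζ) (h2 : ζ ≤ θ) (hθ : θ < lam)
    (E1 : (prev θ hθ).obj η (h1.trans h2) = (prev ζ (h2.trans_lt hθ)).obj η h1)
    (E2 : (prev ζ (h2.trans_lt hθ)).obj ζ le_rfl = (prev θ hθ).obj ζ h2),
    (prev θ hθ).map η ζ h1 h2
      = eqToHom E1 ≫ (prev ζ (h2.trans_lt hθ)).map η ζ h1 le_rfl ≫ eqToHom E2

variable (hc : Compat prev)

noncomputable def bigM (η ζ : Ordinal.{w}) (h : η ≤ ζ) (hζ : ζ < lam) :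
    (prev η (h.trans_lt hζ)).top ⟶ (prev ζ hζ).top :=
  eqToHom (hc.obj_eq η ζ h hζ).symm ≫ (prev ζ hζ).map η ζ h le_rfl

lemma bigM_self (η : Ordinal.{w}) (hη : η < lam) :
    bigM prev hc η η le_rfl hη = 𝟙 _ := by
  simp [bigM, Sys.map_self]

lemma bigM_trans (η ζ θ : Ordinal.{w}) (h1 : η ≤ ζ) (h2 : ζ ≤ θ) (hθ : θ < lam) :
    bigM prev hc η ζ h1 (h2.trans_lt hθ) ≫ bigM prev hc ζ θ h2 hθ
      = bigM prev hc η θ (h1.trans h2) hθ := by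
  have E1 : (prev θ hθ).obj η (h1.trans h2) = (prev ζ (h2.trans_lt hθ)).obj η h1 :=
    (hc.obj_eq η θ (h1.trans h2) hθ).trans (hc.obj_eq η ζ h1 (h2.trans_lt hθ)).symm
  have E2 : (prev ζ (h2.trans_lt hθ)).obj ζ le_rfl = (prev θ hθ).obj ζ h2 :=
    (hc.obj_eq ζ ζ le_rfl (h2.trans_lt hθ)).trans (hc.obj_eq ζ θ h2 hθ).symm
  have hm : (prev ζ (h2.trans_lt hθ)).map η ζ h1 le_rfl
      = eqToHom E1.symm ≫ (prev θ hθ).map η ζ h1 h2 ≫ eqToHom E2.symm := by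
    rw [hc.map_eq η ζ θ h1 h2 hθ E1 E2]; simp
  rw [bigM, bigM, bigM, hm]
  simp [(prev θ hθ).map_comp_assoc, (prev θ hθ).map_comp]

lemma bigM_trans_assoc {Z : C} (η ζ θ : Ordinal.{w}) (h1 : η ≤ ζ) (h2 : ζ ≤ θ) (hθ : θ < lam)
    (t : (prev θ hθ).top ⟶ Z) :
    bigM prev hc η ζ h1 (h2.trans_lt hθ) ≫ bigM prev hc ζ θ h2 hθ ≫ t
      = bigM prev hc η θ (h1.trans h2) hθ ≫ t := by
  rw [← Category.assoc, bigM_trans]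

noncomputable def limFun : Idx lam ⥤ C where
  obj α := (prev α.1 α.2).top
  map {α β} f := bigM prev hc α.1 β.1 (leOfHom f) β.2
  map_id α := bigM_self prev hc α.1 α.2
  map_comp {α β γ} f g := (bigM_trans prev hc α.1 β.1 γ.1 (leOfHom f) (leOfHom g) γ.2).symm

variable (a : C) (cc : ∀ η (h : η < lam), (prev η h).top ⟶ a)
  (hcc : ∀ η ζ (h : η ≤ ζ) (hζ : ζ < lam),
    bigM prev hc η ζ h hζ ≫ cc ζ hζ = cc η (h.trans_lt hζ))

noncomputable def limObj (η : Ordinal.{w}) (_ : η ≤ lam) : C :=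
  if h' : η < lam then (prev η h').top else a

lemma limObj_lt {η} (h : η ≤ lam) (h' : η < lam) : limObj prev a η h = (prev η h').top :=
  dif_pos h'

lemma limObj_top {η} (h : η ≤ lam) (h' : ¬ η < lam) : limObj prev a η h = a :=
  dif_neg h'

noncomputable def limMap (η ζ : Ordinal.{w}) (h1 : η ≤ ζ) (h2 : ζ ≤ lam) :
    limObj prev a η (h1.trans h2) ⟶ limObj prev a ζ h2 :=
  if h2' : ζ < lam then
    eqToHom (limObj_lt prev a _ (h1.trans_lt h2')) ≫ bigM prev hc η ζ h1 h2' ≫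
      eqToHom (limObj_lt prev a h2 h2').symm
  else if h1' : η < lam then
    eqToHom (limObj_lt prev a _ h1') ≫ cc η h1' ≫ eqToHom (limObj_top prev a h2 h2').symm
  else
    eqToHom ((limObj_top prev a _ h1').trans (limObj_top prev a h2 h2').symm)

noncomputable def limSys : Sys.{w} C lam where
  obj := limObj prev a
  map := limMap prev hc a cc
  map_self := by
    intro η h
    unfold limMap
    split_ifs with h1
    · simp [bigM_self]
    · simp
  map_comp := by
    intro η ζ θ h1 h2 h3
    show limMap prev hc a cc η ζ h1 (h2.trans h3) ≫ limMap prev hc a cc ζ θ h2 h3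
      = limMap prev hc a cc η θ (h1.trans h2) h3
    have hcc' : ∀ {Z : C} (η ζ : Ordinal.{w}) (h : η ≤ ζ) (hζ : ζ < lam) (t : a ⟶ Z),
        bigM prev hc η ζ h hζ ≫ cc ζ hζ ≫ t = cc η (h.trans_lt hζ) ≫ t := by
      intro Z η ζ h hζ t
      rw [← Category.assoc, hcc]
    unfold limMap
    by_cases hθ : θ < lam
    · have hζ : ζ < lam := h2.trans_lt hθ
      have hη : η < lam := h1.trans_lt hζ
      rw [dif_pos hθ, dif_pos hθ, dif_pos hζ]
      simp [bigM_trans_assoc]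
    · rw [dif_neg hθ, dif_neg hθ]
      by_cases hζ : ζ < lam
      · have hη : η < lam := h1.trans_lt hζ
        rw [dif_pos hζ, dif_pos hζ, dif_pos hη]
        simp [hcc']
      · rw [dif_neg hζ, dif_neg hζ]
        by_cases hη : η < lam
        · rw [dif_pos hη, dif_pos hη]
          simp
        · rw [dif_neg hη, dif_neg hη]
          simp


lemma limSys_top : (limSys prev hc a cc hcc).top = a :=
  limObj_top prev a le_rfl (lt_irrefl lam)

lemma limSys_obj_restrict (η : Ordinal.{w}) (h : η < lam) (h' : η ≤ lam) :
    (limSys prev hc a cc hcc).obj η h' = (prev η h).top :=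
  limObj_lt prev a h' h

lemma limSys_map_restrict (η ζ : Ordinal.{w}) (h1 : η ≤ ζ) (h2 : ζ < lam) (h2' : ζ ≤ lam)
    (E1 : (limSys prev hc a cc hcc).obj η (h1.trans h2') = (prev ζ h2).obj η h1)
    (E2 : (prev ζ h2).obj ζ le_rfl = (limSys prev hc a cc hcc).obj ζ h2') :
    (limSys prev hc a cc hcc).map η ζ h1 h2'
      = eqToHom E1 ≫ (prev ζ h2).map η ζ h1 le_rfl ≫ eqToHom E2 := by
  show limMap prev hc a cc η ζ h1 h2' = _
  unfold limMap
  rw [dif_pos h2]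
  simp [bigM, eqToHom_trans_assoc]
  rfl

end Lim


end Sys


open Sys

section Steps

attribute [local instance] Classical.propDecidable

variable {C : Type u} [Category.{v} C] (κ : Cardinal.{w}) (F : Set (Arrow C))

/-- Restriction compatibility of a system of length `succ θ` with one of length `θ`. -/
def Restr {θ : Ordinal.{w}} (S : Sys.{w} C θ) (T : Sys.{w} C (Order.succ θ)) : Prop :=
  (∀ η (h : η ≤ θ), T.obj η (h.trans (Order.le_succ θ)) = S.obj η h) ∧
  (∀ η ζ (h1 : η ≤ ζ) (h2 : ζ ≤ θ)
    (E1 : T.obj η ((h1.trans h2).trans (Order.le_succ θ)) = S.obj η (h1.trans h2))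
    (E2 : S.obj ζ h2 = T.obj ζ (h2.trans (Order.le_succ θ))),
    T.map η ζ h1 (h2.trans (Order.le_succ θ)) = eqToHom E1 ≫ S.map η ζ h1 h2 ≫ eqToHom E2)

def EmbedP (enum : Idx κ.ord → F) (p : Idx κ.ord → Idx κ.ord × Idx κ.ord)
    {θ : Ordinal.{w}} (hθ : θ < κ.ord) (T : Sys.{w} C (Order.succ θ)) : Prop :=
  Nonempty (((enum (p ⟨θ, hθ⟩).2).1).left ⟶ T.top)

def TaskP (enum : Idx κ.ord → F) (p : Idx κ.ord → Idx κ.ord × Idx κ.ord)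
    {θ : Ordinal.{w}} (hθ : θ < κ.ord) (S : Sys.{w} C θ) (T : Sys.{w} C (Order.succ θ)) : Prop :=
  ∀ (hα : ((p ⟨θ, hθ⟩).1).1 ≤ θ)
    (he : ((enum (p ⟨θ, hθ⟩).2).1).left = S.obj ((p ⟨θ, hθ⟩).1).1 hα)
    (E : S.top = T.obj θ (Order.le_succ θ)),
    ∃ g : ((enum (p ⟨θ, hθ⟩).2).1).right ⟶ T.top,
      eqToHom he.symm ≫ ((enum (p ⟨θ, hθ⟩).2).1).hom ≫ g
        = S.map ((p ⟨θ, hθ⟩).1).1 θ hα le_rfl ≫ eqToHom E ≫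
            T.map θ (Order.succ θ) (Order.le_succ θ) le_rfl

noncomputable def succStepP (hamalg : AmalgProp C) (hjep : JointEmbProp C)
    (hdom : Dominating F) (enum : Idx κ.ord → F) (p : Idx κ.ord → Idx κ.ord × Idx κ.ord)
    (θ : Ordinal.{w}) (S : Sys.{w} C θ) :
    {T : Sys.{w} C (Order.succ θ) // Restr S T ∧ (∃ f ∈ F, f.left = T.top) ∧
      ∀ hθ : θ < κ.ord, EmbedP κ F enum p hθ T ∧ TaskP κ F enum p hθ S T} :=
  Classical.choice <| by
  by_cases hθ : θ < κ.ord
  · obtain ⟨w, ⟨j1⟩, ⟨j2⟩⟩ := hjep S.top ((enum (p ⟨θ, hθ⟩).2).1).left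
    by_cases htask : ∃ hα : ((p ⟨θ, hθ⟩).1).1 ≤ θ,
        ((enum (p ⟨θ, hθ⟩).2).1).left = S.obj ((p ⟨θ, hθ⟩).1).1 hα
    · obtain ⟨hα, he⟩ := htask
      obtain ⟨d, f', g', hcomm⟩ := hamalg _ _ _
        (eqToHom he.symm ≫ ((enum (p ⟨θ, hθ⟩).2).1).hom)
        (S.map ((p ⟨θ, hθ⟩).1).1 θ hα le_rfl ≫ j1)
      obtain ⟨fd, hfdF, ⟨t⟩⟩ := hdom.1 d
      refine ⟨S.extend fd.left (j1 ≫ g' ≫ t),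
        ⟨fun η h => S.extend_obj_restrict fd.left (j1 ≫ g' ≫ t) η h _,
         fun η ζ h1 h2 E1 E2 => S.extend_map_restrict fd.left (j1 ≫ g' ≫ t) η ζ h1 h2 _ E1 E2⟩,
        ⟨fd, hfdF, (S.extend_top fd.left (j1 ≫ g' ≫ t)).symm⟩, fun hθ' => ?_⟩
      constructor
      · exact ⟨j2 ≫ g' ≫ t ≫ eqToHom (S.extend_top fd.left (j1 ≫ g' ≫ t)).symm⟩
      · intro hα' he' E
        refine ⟨f' ≫ t ≫ eqToHom (S.extend_top fd.left (j1 ≫ g' ≫ t)).symm, ?_⟩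
        rw [S.extend_succ_map fd.left (j1 ≫ g' ≫ t) E.symm
          (S.extend_top fd.left (j1 ≫ g' ≫ t)).symm]
        have hcomm' := reassoc_of% hcomm
        simp [reassoc_of% hcomm]
    · obtain ⟨fd, hfdF, ⟨t⟩⟩ := hdom.1 w
      refine ⟨S.extend fd.left (j1 ≫ t),
        ⟨fun η h => S.extend_obj_restrict fd.left (j1 ≫ t) η h _,
         fun η ζ h1 h2 E1 E2 => S.extend_map_restrict fd.left (j1 ≫ t) η ζ h1 h2 _ E1 E2⟩,
        ⟨fd, hfdF, (S.extend_top fd.left (j1 ≫ t)).symm⟩, fun hθ' => ?_⟩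
      constructor
      · exact ⟨j2 ≫ t ≫ eqToHom (S.extend_top fd.left (j1 ≫ t)).symm⟩
      · intro hα' he' E
        exact absurd ⟨hα', he'⟩ htask
  · obtain ⟨fd, hfdF, ⟨t⟩⟩ := hdom.1 S.top
    refine ⟨S.extend fd.left t,
      ⟨fun η h => S.extend_obj_restrict fd.left t η h _,
       fun η ζ h1 h2 E1 E2 => S.extend_map_restrict fd.left t η ζ h1 h2 _ E1 E2⟩,
      ⟨fd, hfdF, (S.extend_top fd.left t).symm⟩, fun hθ' => absurd hθ' hθ⟩

def LimRestr {lam : Ordinal.{w}} (prev : ∀ η, η < lam → Sys.{w} C η) (T : Sys.{w} C lam) : Prop :=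
  (∀ η (h : η < lam), T.obj η h.le = (prev η h).top) ∧
  (∀ η ζ (h1 : η ≤ ζ) (h2 : ζ < lam)
    (E1 : T.obj η (h1.trans h2.le) = (prev ζ h2).obj η h1)
    (E2 : (prev ζ h2).obj ζ le_rfl = T.obj ζ h2.le),
    T.map η ζ h1 h2.le = eqToHom E1 ≫ (prev ζ h2).map η ζ h1 le_rfl ≫ eqToHom E2)

noncomputable def limStageP (hbd : KappaBounded C κ) (hdom : Dominating F)
    (lam : Ordinal.{w}) (hlam : lam < κ.ord) (prev : ∀ η, η < lam → Sys.{w} C η)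
    (hc : Sys.Compat prev) :
    {T : Sys.{w} C lam // LimRestr prev T ∧ ∃ f ∈ F, f.left = T.top} :=
  Classical.choice <| by
  obtain ⟨y, cc, hcc⟩ := hbd lam hlam (limFun prev hc)
  obtain ⟨fd, hfdF, ⟨t⟩⟩ := hdom.1 y
  have hcc' : ∀ (η ζ : Ordinal.{w}) (h : η ≤ ζ) (hζ : ζ < lam),
      bigM prev hc η ζ h hζ ≫ (fun η h => cc ⟨η, h⟩ ≫ t) ζ hζ
        = (fun η h => cc ⟨η, h⟩ ≫ t) η (h.trans_lt hζ) := by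
    intro η ζ h hζ
    show bigM prev hc η ζ h hζ ≫ cc ⟨ζ, hζ⟩ ≫ t = cc ⟨η, h.trans_lt hζ⟩ ≫ t
    refine (Category.assoc _ _ _).symm.trans ?_
    exact congrArg (· ≫ t) (hcc ⟨η, h.trans_lt hζ⟩ ⟨ζ, hζ⟩ h)
  refine ⟨limSys prev hc fd.left (fun η h => cc ⟨η, h⟩ ≫ t) hcc',
    ⟨fun η h => limSys_obj_restrict prev hc fd.left _ hcc' η h _,
     fun η ζ h1 h2 E1 E2 => limSys_map_restrict prev hc fd.left _ hcc' η ζ h1 h2 _ E1 E2⟩,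
    fd, hfdF, (limSys_top prev hc fd.left _ hcc').symm⟩

end Steps



section Seq

variable {C : Type u} [Category.{v} C] (κ : Cardinal.{w}) (F : Set (Arrow C))

structure Setup (C : Type u) [Category.{v} C] (κ : Cardinal.{w}) (F : Set (Arrow C)) where
  hbd : KappaBounded C κ
  hamalg : AmalgProp C
  hjep : JointEmbProp C
  hdom : Dominating F
  enum : Idx κ.ord → F
  p : Idx κ.ord → Idx κ.ord × Idx κ.ord
  a0 : C
  ha0 : ∃ f ∈ F, f.left = a0

variable (Z : Setup C κ F)

attribute [local instance] Classical.propDecidable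

noncomputable def seq : ∀ ξ : Ordinal.{w}, Sys.{w} C ξ := fun ξ =>
  @Ordinal.limitRecOn (fun ξ => Sys.{w} C ξ) ξ (Sys.const C 0 Z.a0)
    (fun θ S => (succStepP κ F Z.hamalg Z.hjep Z.hdom Z.enum Z.p θ S).val)
    (fun lam _ prev =>
      if H : lam < κ.ord ∧ Sys.Compat prev then
        (limStageP κ F Z.hbd Z.hdom lam H.1 prev H.2).val
      else Sys.const C lam Z.a0)

lemma seq_zero : seq κ F Z 0 = Sys.const C 0 Z.a0 := by
  simp only [seq]
  exact Ordinal.limitRecOn_zero _ _ _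

lemma seq_succ (θ : Ordinal.{w}) :
    seq κ F Z (Order.succ θ)
      = (succStepP κ F Z.hamalg Z.hjep Z.hdom Z.enum Z.p θ (seq κ F Z θ)).val := by
  simp only [seq]
  exact Ordinal.limitRecOn_succ _ _ _ _

lemma seq_isLimit (lam : Ordinal.{w}) (hl : Order.IsSuccLimit lam) (hκl : lam < κ.ord)
    (hcompat : Sys.Compat (fun η (_ : η < lam) => seq κ F Z η)) :
    seq κ F Z lam
      = (limStageP κ F Z.hbd Z.hdom lam hκl (fun η _ => seq κ F Z η) hcompat).val := by
  simp only [seq]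
  exact (Ordinal.limitRecOn_limit _ _ _ _ hl).trans (dif_pos ⟨hκl, hcompat⟩)

lemma seq_isLimit_neg (lam : Ordinal.{w}) (hl : Order.IsSuccLimit lam)
    (H : ¬ (lam < κ.ord ∧ Sys.Compat (fun η (_ : η < lam) => seq κ F Z η))) :
    seq κ F Z lam = Sys.const C lam Z.a0 := by
  have e : seq κ F Z lam
      = if H : lam < κ.ord ∧ Sys.Compat (fun η (_ : η < lam) => seq κ F Z η) then
          (limStageP κ F Z.hbd Z.hdom lam H.1 (fun η _ => seq κ F Z η) H.2).val
        else Sys.const C lam Z.a0 := by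
    simp only [seq]
    exact Ordinal.limitRecOn_limit _ _ _ _ hl
  rw [e, dif_neg H]

lemma seq_props : ∀ ζ : Ordinal.{w}, ζ < κ.ord →
    (∀ η (h : η ≤ ζ), (seq κ F Z ζ).obj η h = (seq κ F Z η).top) ∧
    (∀ η θ' (h1 : η ≤ θ') (h2 : θ' ≤ ζ)
      (E1 : (seq κ F Z ζ).obj η (h1.trans h2) = (seq κ F Z θ').obj η h1)
      (E2 : (seq κ F Z θ').obj θ' le_rfl = (seq κ F Z ζ).obj θ' h2),
      (seq κ F Z ζ).map η θ' h1 h2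
        = eqToHom E1 ≫ (seq κ F Z θ').map η θ' h1 le_rfl ≫ eqToHom E2) := by
  intro ζ
  induction ζ using Ordinal.induction with
  | h ζ ih =>
  intro hζκ
  rcases Ordinal.zero_or_succ_or_isSuccLimit ζ with rfl | ⟨θ, rfl⟩ | hl
  · constructor
    · intro η h
      obtain rfl : η = 0 := nonpos_iff_eq_zero.mp h
      rfl
    · intro η θ' h1 h2 E1 E2
      obtain rfl : θ' = 0 := nonpos_iff_eq_zero.mp h2
      obtain rfl : η = 0 := nonpos_iff_eq_zero.mp h1
      simp [Sys.map_self]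
  · have hθκ : θ < κ.ord := (Order.lt_succ θ).trans hζκ
    have hP := (succStepP κ F Z.hamalg Z.hjep Z.hdom Z.enum Z.p θ (seq κ F Z θ)).2.1
    rw [← seq_succ κ F Z θ] at hP
    have ihθ := ih θ (Order.lt_succ θ) hθκ
    constructor
    · intro η h
      by_cases hη : η ≤ θ
      · exact (hP.1 η hη).trans (ihθ.1 η hη)
      · obtain rfl : η = Order.succ θ := by
          rcases h.lt_or_eq with h3 | h3
          · exact absurd (Order.lt_succ_iff.mp h3) hη
          · exact h3
        rfl
    · intro η θ' h1 h2 E1 E2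
      by_cases hθ' : θ' ≤ θ
      · have ihθ'' := ih θ' (lt_of_le_of_lt hθ' (Order.lt_succ θ)) (lt_of_le_of_lt hθ' hθκ)
        have A1 : (seq κ F Z (Order.succ θ)).obj η (h1.trans h2)
            = (seq κ F Z θ).obj η (h1.trans hθ') := hP.1 η (h1.trans hθ')
        have A2 : (seq κ F Z θ).obj θ' hθ'
            = (seq κ F Z (Order.succ θ)).obj θ' h2 := (hP.1 θ' hθ').symm
        have B1 : (seq κ F Z θ).obj η (h1.trans hθ') = (seq κ F Z θ').obj η h1 :=
          (ihθ.1 η (h1.trans hθ')).trans (ihθ''.1 η h1).symm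
        have B2 : (seq κ F Z θ').obj θ' le_rfl = (seq κ F Z θ).obj θ' hθ' :=
          (ihθ.1 θ' hθ').symm
        calc (seq κ F Z (Order.succ θ)).map η θ' h1 h2
            = eqToHom A1 ≫ (seq κ F Z θ).map η θ' h1 hθ' ≫ eqToHom A2 :=
              hP.2 η θ' h1 hθ' A1 A2
          _ = eqToHom A1 ≫ (eqToHom B1 ≫ (seq κ F Z θ').map η θ' h1 le_rfl ≫ eqToHom B2)
                ≫ eqToHom A2 := by rw [ihθ.2 η θ' h1 hθ' B1 B2]
          _ = eqToHom E1 ≫ (seq κ F Z θ').map η θ' h1 le_rfl ≫ eqToHom E2 := by simp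
      · obtain rfl : θ' = Order.succ θ := by
          rcases h2.lt_or_eq with h3 | h3
          · exact absurd (Order.lt_succ_iff.mp h3) hθ'
          · exact h3
        simp only [eqToHom_refl, Category.comp_id, Category.id_comp]
  · have hcompat : Sys.Compat (fun η (_ : η < ζ) => seq κ F Z η) :=
      ⟨fun η θ' h hθ' => (ih θ' hθ' (hθ'.trans hζκ)).1 η h,
       fun η θ'' θ' h1 h2 hθ' E1 E2 => (ih θ' hθ' (hθ'.trans hζκ)).2 η θ'' h1 h2 E1 E2⟩
    have hP := (limStageP κ F Z.hbd Z.hdom ζ hζκ _ hcompat).2.1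
    rw [← seq_isLimit κ F Z ζ hl hζκ hcompat] at hP
    constructor
    · intro η h
      rcases h.lt_or_eq with hlt | rfl
      · exact hP.1 η hlt
      · rfl
    · intro η θ' h1 h2 E1 E2
      rcases h2.lt_or_eq with hlt | rfl
      · exact hP.2 η θ' h1 hlt E1 E2
      · simp only [eqToHom_refl, Category.comp_id, Category.id_comp]

lemma seq_mem : ∀ ξ : Ordinal.{w}, ∃ f ∈ F, f.left = (seq κ F Z ξ).top := by
  intro ξ
  induction ξ using Ordinal.induction with
  | h ξ ih =>
  rcases Ordinal.zero_or_succ_or_isSuccLimit ξ with rfl | ⟨θ, rfl⟩ | hl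
  · rw [seq_zero]
    exact Z.ha0
  · have h := (succStepP κ F Z.hamalg Z.hjep Z.hdom Z.enum Z.p θ (seq κ F Z θ)).2.2.1
    rw [← seq_succ κ F Z θ] at h
    exact h
  · by_cases H : ξ < κ.ord ∧ Sys.Compat (fun η (_ : η < ξ) => seq κ F Z η)
    · have h := (limStageP κ F Z.hbd Z.hdom ξ H.1 _ H.2).2.2
      rw [← seq_isLimit κ F Z ξ hl H.1 H.2] at h
      exact h
    · rw [seq_isLimit_neg κ F Z ξ hl H]
      exact Z.ha0

lemma seq_task (γ : Idx κ.ord)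
    (hα : ((Z.p γ).1).1 ≤ γ.1)
    (he : ((Z.enum (Z.p γ).2).1).left = (seq κ F Z γ.1).obj ((Z.p γ).1).1 hα)
    (E : (seq κ F Z γ.1).top
      = (seq κ F Z (Order.succ γ.1)).obj γ.1 (Order.le_succ γ.1)) :
    ∃ g : ((Z.enum (Z.p γ).2).1).right ⟶ (seq κ F Z (Order.succ γ.1)).top,
      eqToHom he.symm ≫ ((Z.enum (Z.p γ).2).1).hom ≫ g
        = (seq κ F Z γ.1).map ((Z.p γ).1).1 γ.1 hα le_rfl ≫ eqToHom E ≫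
            (seq κ F Z (Order.succ γ.1)).map γ.1 (Order.succ γ.1) (Order.le_succ γ.1) le_rfl := by
  have hP := (succStepP κ F Z.hamalg Z.hjep Z.hdom Z.enum Z.p γ.1 (seq κ F Z γ.1)).2
  rw [← seq_succ κ F Z γ.1] at hP
  exact (hP.2.2 γ.2).2 hα he E

lemma seq_embed (γ : Idx κ.ord) :
    Nonempty (((Z.enum (Z.p γ).2).1).left ⟶ (seq κ F Z (Order.succ γ.1)).top) := by
  have hP := (succStepP κ F Z.hamalg Z.hjep Z.hdom Z.enum Z.p γ.1 (seq κ F Z γ.1)).2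
  rw [← seq_succ κ F Z γ.1] at hP
  exact (hP.2.2 γ.2).1

lemma arrow_hom_conj {f g : Arrow C} (hfg : f = g) (E1 : f.left = g.left)
    (E2 : g.right = f.right) : f.hom = eqToHom E1 ≫ g.hom ≫ eqToHom E2 := by
  subst hfg
  simp

end Seq


end FraisseAux


theorem exists_fraisseSeq {C : Type u} [Category.{v} C] (κ : Cardinal.{max u v})
    (hκ : κ.IsRegular) (hbd : KappaBounded C κ) (hamalg : AmalgProp C)
    (hjep : JointEmbProp C) (F : Set (Arrow C)) (hdom : Dominating F)
    (hcard : Cardinal.mk F ≤ κ) :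
    ∃ u : Idx κ.ord ⥤ C, IsFraisseSeq u := by
  classical
  have hord0 : (0 : Ordinal.{max u v}) < κ.ord := by
    rw [Cardinal.lt_ord, Ordinal.card_zero]
    exact hκ.pos
  let X0 : Idx (0 : Ordinal.{max u v}) ⥤ C :=
    { obj := fun x => absurd x.2 (not_lt_zero (a := x.1))
      map := fun {x} _ => absurd x.2 (not_lt_zero (a := x.1))
      map_id := fun x => absurd x.2 (not_lt_zero (a := x.1))
      map_comp := fun {x} _ _ _ _ => absurd x.2 (not_lt_zero (a := x.1)) }
  obtain ⟨y₀, -, -⟩ := hbd 0 hord0 X0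
  obtain ⟨f0, hf0F, -⟩ := hdom.1 y₀
  have hFne : Nonempty F := ⟨⟨f0, hf0F⟩⟩
  have hIdx : Cardinal.mk (Idx κ.ord) = Cardinal.lift.{(max u v)+1} κ := by
    have e : Idx κ.ord ≃ (Set.Iio κ.ord) := Equiv.subtypeEquivRight (fun x => Iff.rfl)
    rw [Cardinal.mk_congr e, Ordinal.mk_Iio_ordinal, Cardinal.card_ord]
  have hInf : Cardinal.aleph0 ≤ Cardinal.mk (Idx κ.ord) := by
    rw [hIdx]; exact Cardinal.aleph0_le_lift.2 hκ.aleph0_le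
  have hemb : Nonempty (↥F ↪ Idx κ.ord) := by
    rw [← Cardinal.lift_mk_le', hIdx, Cardinal.lift_lift]
    exact Cardinal.lift_le.mpr hcard
  obtain ⟨emb⟩ := hemb
  have hq : Cardinal.mk (Idx κ.ord × (Idx κ.ord × Idx κ.ord)) = Cardinal.mk (Idx κ.ord) := by
    simp only [Cardinal.mk_prod, Cardinal.lift_id]
    rw [Cardinal.mul_eq_self hInf, Cardinal.mul_eq_self hInf]
  obtain ⟨q⟩ := Cardinal.eq.1 hq
  let Z : FraisseAux.Setup C κ F :=
    { hbd := hbd, hamalg := hamalg, hjep := hjep, hdom := hdom,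
      enum := Function.invFun emb, p := fun γ => (q.symm γ).2, a0 := f0.left,
      ha0 := ⟨f0, hf0F, rfl⟩ }
  have henum : Function.Surjective Z.enum := Function.invFun_surjective emb.injective
  have hp : ∀ ξ α β : Idx κ.ord, ∃ γ, ξ ≤ γ ∧ Z.p γ = (α, β) := by
    intro ξ α β
    by_contra hcon
    push_neg at hcon
    have hj : ∀ δ : Idx κ.ord, (q (δ, (α, β))).1 < ξ.1 := by
      intro δ
      by_contra hge
      refine hcon (q (δ, (α, β))) (not_lt.mp hge) ?_
      show (q.symm (q (δ, (α, β)))).2 = (α, β)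
      rw [Equiv.symm_apply_apply]
    have hjinj : Function.Injective (fun δ : Idx κ.ord =>
        (⟨(q (δ, (α, β))).1, hj δ⟩ : {x : Ordinal.{max u v} // x < ξ.1})) := by
      intro a b hab
      have h0 := congrArg Subtype.val hab
      have h1 : q (a, (α, β)) = q (b, (α, β)) := Subtype.ext h0
      exact congrArg Prod.fst (q.injective h1)
    have hle : Cardinal.mk (Idx κ.ord) ≤ Cardinal.mk {x : Ordinal.{max u v} // x < ξ.1} :=
      Cardinal.mk_le_of_injective hjinj
    have hlt : Cardinal.mk {x : Ordinal.{max u v} // x < ξ.1} < Cardinal.mk (Idx κ.ord) := by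
      have e2 : {x : Ordinal.{max u v} // x < ξ.1} ≃ (Set.Iio ξ.1) :=
        Equiv.subtypeEquivRight (fun x => Iff.rfl)
      rw [Cardinal.mk_congr e2, Ordinal.mk_Iio_ordinal, hIdx]
      exact Cardinal.lift_lt.2 (Cardinal.lt_ord.1 ξ.2)
    exact absurd (hle.trans_lt hlt) (lt_irrefl _)
  have hQ := FraisseAux.seq_props κ F Z
  have hmem := FraisseAux.seq_mem κ F Z
  have compatAll : FraisseAux.Sys.Compat (fun η (_ : η < κ.ord) => FraisseAux.seq κ F Z η) :=
    ⟨fun η θ' h hθ' => (hQ θ' hθ').1 η h,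
     fun η θ'' θ' h1 h2 hθ' E1 E2 => (hQ θ' hθ').2 η θ'' h1 h2 E1 E2⟩
  have hsucclt : ∀ γ : Idx κ.ord, Order.succ γ.1 < κ.ord :=
    fun γ => (Cardinal.isSuccLimit_ord hκ.aleph0_le).succ_lt γ.2
  refine ⟨FraisseAux.Sys.limFun _ compatAll, ?_, ?_⟩
  · -- (U)
    intro x
    obtain ⟨f, hfF, ⟨i⟩⟩ := hdom.1 x
    obtain ⟨β, hβ⟩ := henum ⟨f, hfF⟩
    obtain ⟨γ, -, hγp⟩ := hp ⟨0, hord0⟩ ⟨0, hord0⟩ β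
    obtain ⟨j⟩ := FraisseAux.seq_embed κ F Z γ
    have hγp2 : (Z.p γ).2 = β := by rw [hγp]
    have hleft : ((Z.enum (Z.p γ).2).1).left = f.left := by rw [hγp2, hβ]
    exact ⟨⟨Order.succ γ.1, hsucclt γ⟩, ⟨i ≫ eqToHom hleft.symm ≫ j⟩⟩
  · -- (A)
    intro ξ y φ
    obtain ⟨f₀, hf₀F, hf₀⟩ := hmem ξ.1
    obtain ⟨w, h, hwmem⟩ := hdom.2 f₀ hf₀F y (eqToHom hf₀ ≫ φ)
    obtain ⟨β, hβ⟩ := henum ⟨Arrow.mk ((eqToHom hf₀ ≫ φ) ≫ h), hwmem⟩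
    obtain ⟨γ, hξγ, hγp⟩ := hp ξ ξ β
    have h1 : ξ = (Z.p γ).1 := by rw [hγp]
    have h2 : β = (Z.p γ).2 := by rw [hγp]
    subst h2
    subst h1
    have hsucc := hsucclt γ
    have hα : ((Z.p γ).1).1 ≤ γ.1 := hξγ
    have he : ((Z.enum (Z.p γ).2).1).left
        = (FraisseAux.seq κ F Z γ.1).obj ((Z.p γ).1).1 hα := by
      rw [hβ]
      exact hf₀.trans ((hQ γ.1 γ.2).1 ((Z.p γ).1).1 hα).symm
    have E : (FraisseAux.seq κ F Z γ.1).top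
        = (FraisseAux.seq κ F Z (Order.succ γ.1)).obj γ.1 (Order.le_succ γ.1) :=
      ((hQ (Order.succ γ.1) hsucc).1 γ.1 (Order.le_succ γ.1)).symm
    obtain ⟨g, hg⟩ := FraisseAux.seq_task κ F Z γ hα he E
    have hER' : (Arrow.mk ((eqToHom hf₀ ≫ φ) ≫ h)).right
        = ((Z.enum (Z.p γ).2).1).right := by rw [hβ]
    refine ⟨⟨Order.succ γ.1, hsucc⟩, hα.trans (Order.le_succ γ.1),
      h ≫ eqToHom hER' ≫ g, ?_⟩
    show φ ≫ (h ≫ eqToHom hER' ≫ g)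
      = FraisseAux.Sys.bigM (fun η _ => FraisseAux.seq κ F Z η) compatAll
        ((Z.p γ).1).1 (Order.succ γ.1) (hα.trans (Order.le_succ γ.1)) hsucc
    unfold FraisseAux.Sys.bigM
    rw [← FraisseAux.Sys.map_comp (FraisseAux.seq κ F Z (Order.succ γ.1))
      ((Z.p γ).1).1 γ.1 (Order.succ γ.1) hα (Order.le_succ γ.1) le_rfl]
    have E1' : (FraisseAux.seq κ F Z (Order.succ γ.1)).obj ((Z.p γ).1).1
        (hα.trans (Order.le_succ γ.1))
        = (FraisseAux.seq κ F Z γ.1).obj ((Z.p γ).1).1 hα :=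
      ((hQ (Order.succ γ.1) hsucc).1 ((Z.p γ).1).1 (hα.trans (Order.le_succ γ.1))).trans
        ((hQ γ.1 γ.2).1 ((Z.p γ).1).1 hα).symm
    rw [(hQ (Order.succ γ.1) hsucc).2 ((Z.p γ).1).1 γ.1 hα (Order.le_succ γ.1) E1' E]
    have hEL : ((Z.enum (Z.p γ).2).1).left
        = (Arrow.mk ((eqToHom hf₀ ≫ φ) ≫ h)).left := by rw [hβ]
    have hhom : ((Z.enum (Z.p γ).2).1).hom
        = eqToHom hEL ≫ (Arrow.mk ((eqToHom hf₀ ≫ φ) ≫ h)).hom ≫ eqToHom hER' :=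
      FraisseAux.arrow_hom_conj (congrArg Subtype.val hβ) hEL hER'
    rw [hhom] at hg
    refine (cancel_epi (eqToHom ((hQ γ.1 γ.2).1 ((Z.p γ).1).1 hα))).1 ?_
    simp only [Category.assoc, eqToHom_trans_assoc, Arrow.mk_hom, eqToHom_refl,
      Category.id_comp] at hg ⊢
    refine Eq.trans ?_ hg
    exact (congrArg (· ≫ φ ≫ h ≫ eqToHom hER' ≫ g) (eqToHom_trans _ hf₀).symm).trans
      ((Category.assoc _ _ _).trans (congrArg (eqToHom _ ≫ ·) (Category.assoc _ _ _).symm))
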